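/- Let q ≥ 1 and n₁,…,n_q be positive integers, and let P be the polynomial ring over 𝔽₂ = ℤ/2 in the indeterminates β_i^{(p)} for 1 ≤ p ≤ q and 1 ≤ i ≤ ⌊n_p/2⌋. With the conventions β_0^{(p)} := 1, β_i^{(p)} := β_{n_p−i}^{(p)} for ⌊n_p/2⌋ < i ≤ n_p, and β_i^{(p)} := 0 for i < 0 or i > n_p, define μ_m := Σ_{a₁+⋯+a_q = m} β_{a₁}^{(1)}⋯β_{a_q}^{(q)} ∈ P and set N := n₁ + ⋯ + n_q. If the number k of indices p with n_p odd is odd and k ≥ 3, then Σ_{m=0}^{⌊N/2⌋} μ_m = 0 in P. -/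

import Mathlib

open MvPolynomial

/-- A sequence (given as a list) `a₁, …, aₙ` in a commutative ring `A` is `A`-regular if for
each `i`, `aᵢ` is not a zero divisor on `A ⧸ (a₁, …, a_{i-1})`. -/
def IsRegularSeq {A : Type*} [CommRing A] (l : List A) : Prop :=
  ∀ (i : ℕ) (h : i < l.length), ∀ x : A,
    l.get ⟨i, h⟩ * x ∈ Ideal.span {y | y ∈ l.take i} →
      x ∈ Ideal.span {y | y ∈ l.take i}

/-- The element `β_i^{(p)}` of the polynomial ring `P` over `𝔽₂` in the indeterminates
`β_i^{(p)}`, `1 ≤ p ≤ q`, `1 ≤ i ≤ ⌊n_p/2⌋`, with the conventions `β_0^{(p)} = 1`,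
`β_i^{(p)} = β_{n_p−i}^{(p)}` for `⌊n_p/2⌋ < i ≤ n_p`, and `β_i^{(p)} = 0` for `i > n_p`. -/
noncomputable def bb (q : ℕ) (n : Fin q → ℕ) (p : Fin q) (i : ℕ) :
    MvPolynomial (Σ p : Fin q, Fin (n p / 2)) (ZMod 2) :=
  if h : i ≤ n p then
    (if h1 : 1 ≤ min i (n p - i) then X ⟨p, ⟨min i (n p - i) - 1, by omega⟩⟩ else 1)
  else 0

/-- `μ_m := Σ_{a₁+⋯+a_q = m} β_{a₁}^{(1)} ⋯ β_{a_q}^{(q)}`. -/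
noncomputable def muP (q : ℕ) (n : Fin q → ℕ) (m : ℕ) :
    MvPolynomial (Σ p : Fin q, Fin (n p / 2)) (ZMod 2) :=
  ∑ a ∈ (Fintype.piFinset fun _ : Fin q => Finset.range (m + 1)).filter
      (fun a => ∑ p, a p = m),
    ∏ p, bb q n p (a p)

/-- `μ̃_m := μ_m + (binom(n₁+⋯+n_q, m) mod 2)`. -/
noncomputable def muTildeP (q : ℕ) (n : Fin q → ℕ) (m : ℕ) :
    MvPolynomial (Σ p : Fin q, Fin (n p / 2)) (ZMod 2) :=
  muP q n m + (Nat.choose (∑ p, n p) m : MvPolynomial (Σ p : Fin q, Fin (n p / 2)) (ZMod 2))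

lemma bb_eq_zero (q : ℕ) (n : Fin q → ℕ) (p : Fin q) (i : ℕ) (h : n p < i) :
    bb q n p i = 0 := by
  rw [bb, dif_neg (by omega)]

lemma bb_congr (q : ℕ) (n : Fin q → ℕ) (p : Fin q) {i j : ℕ} (hi : i ≤ n p) (hj : j ≤ n p)
    (h : min i (n p - i) = min j (n p - j)) : bb q n p i = bb q n p j := by
  rw [bb, bb, dif_pos hi, dif_pos hj]
  simp only [h]

lemma bb_min (q : ℕ) (n : Fin q → ℕ) (p : Fin q) (i : ℕ) (h : i ≤ n p) :
    bb q n p i = bb q n p (min i (n p - i)) :=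
  bb_congr q n p h (by omega) (by omega)

/-- If the number `k` of indices `p` with `n_p` odd is odd and `k ≥ 3`, then
`Σ_{m=0}^{⌊N/2⌋} μ_m = 0`, where `N = n₁ + ⋯ + n_q`. -/
theorem stmt_13 (q : ℕ) (hq : 1 ≤ q) (n : Fin q → ℕ) (hn : ∀ p, 1 ≤ n p)
    (hk : Odd (Finset.univ.filter fun p => Odd (n p)).card)
    (hk3 : 3 ≤ (Finset.univ.filter fun p => Odd (n p)).card) :
    ∑ m ∈ Finset.range ((∑ p, n p) / 2 + 1), muP q n m = 0 := by
  classical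
  set N := ∑ p, n p with hN
  have hNodd : Odd N := (Finset.odd_sum_iff_odd_card_odd n).mpr hk
  set M := N / 2 with hMdef
  have hNM : N = 2 * M + 1 := by
    obtain ⟨c, hc⟩ := hNodd; omega
  set B : Finset (Fin q → ℕ) :=
    (Fintype.piFinset fun _ : Fin q => Finset.range (M + 1)).filter
      (fun a => ∑ p, a p ≤ M) with hB
  have key : ∀ a ∈ B, (∑ p, a p) ∈ Finset.range (M + 1) := by
    intro a ha
    rw [hB, Finset.mem_filter] at ha
    exact Finset.mem_range.2 (by omega)
  have step1 : ∑ m ∈ Finset.range (M + 1), muP q n m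
      = ∑ a ∈ B, ∏ p, bb q n p (a p) := by
    rw [← Finset.sum_fiberwise_of_maps_to key (fun a => ∏ p, bb q n p (a p))]
    refine Finset.sum_congr rfl fun m hm => ?_
    rw [muP]
    refine Finset.sum_congr ?_ fun a _ => rfl
    have hm' : m ≤ M := by
      have := Finset.mem_range.1 hm; omega
    ext a
    simp only [Finset.mem_filter, Fintype.mem_piFinset, Finset.mem_range, hB]
    constructor
    · rintro ⟨h1, h2⟩
      have hle : ∀ p, a p ≤ m := fun p =>
        h2 ▸ Finset.single_le_sum (f := a) (fun i _ => Nat.zero_le _) (Finset.mem_univ p)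
      exact ⟨⟨fun p => by have := hle p; omega, by omega⟩, h2⟩
    · rintro ⟨⟨h1, h2⟩, h3⟩
      have hle : ∀ p, a p ≤ m := fun p =>
        h3 ▸ Finset.single_le_sum (f := a) (fun i _ => Nat.zero_le _) (Finset.mem_univ p)
      exact ⟨fun p => by have := hle p; omega, h3⟩
  rw [step1]
  set C := B.filter (fun a => ∀ p, a p ≤ n p) with hC
  have step2 : ∑ a ∈ B, ∏ p, bb q n p (a p) = ∑ a ∈ C, ∏ p, bb q n p (a p) := by
    rw [hC]
    refine (Finset.sum_filter_of_ne ?_).symm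
    intro a _ hne
    by_contra hcon
    push_neg at hcon
    obtain ⟨p, hp⟩ := hcon
    exact hne (Finset.prod_eq_zero (Finset.mem_univ p) (bb_eq_zero q n p _ hp))
  rw [step2]
  have step3 : ∀ a ∈ C, (∏ p, bb q n p (a p))
      = ∏ p, bb q n p (min (a p) (n p - a p)) := by
    intro a ha
    rw [hC, Finset.mem_filter] at ha
    exact Finset.prod_congr rfl fun p _ => bb_min q n p (a p) (ha.2 p)
  rw [Finset.sum_congr rfl step3]
  have hcomp := Finset.sum_comp (s := C)
    (fun b : Fin q → ℕ => ∏ p, bb q n p (b p)) (fun a p => min (a p) (n p - a p))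
  simp only at hcomp
  rw [hcomp]
  refine Finset.sum_eq_zero fun m hm => ?_
  obtain ⟨a0, ha0C, ha0⟩ := Finset.mem_image.1 hm
  rw [hC, Finset.mem_filter] at ha0C
  have hm2 : ∀ p, 2 * m p ≤ n p := by
    intro p
    have h1 : a0 p ≤ n p := ha0C.2 p
    have h2 : m p = min (a0 p) (n p - a0 p) := (congrFun ha0 p).symm
    omega
  -- the fiber has even cardinality
  have heven : Even (C.filter fun a => (fun p => min (a p) (n p - a p)) = m).card := by
    set D := Fintype.piFinset (fun p => ({m p, n p - m p} : Finset ℕ)) with hD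
    have hCD : (C.filter fun a => (fun p => min (a p) (n p - a p)) = m)
        = D.filter (fun a => ∑ p, a p ≤ M) := by
      ext a
      simp only [hC, hB, hD, Finset.mem_filter, Fintype.mem_piFinset, Finset.mem_range,
        Finset.mem_insert, Finset.mem_singleton]
      constructor
      · rintro ⟨⟨⟨h1, h2⟩, h3⟩, h4⟩
        refine ⟨fun p => ?_, h2⟩
        have h4' : min (a p) (n p - a p) = m p := congrFun h4 p
        have := h3 p
        omega
      · rintro ⟨h1, h2⟩
        have ha_le : ∀ p, a p ≤ n p := by
          intro p
          rcases h1 p with h | h <;> (have := hm2 p; omega)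
        have hsum : ∀ p, a p ≤ ∑ p, a p := fun p =>
          Finset.single_le_sum (f := a) (fun i _ => Nat.zero_le _) (Finset.mem_univ p)
        refine ⟨⟨⟨fun p => by have := hsum p; omega, h2⟩, ha_le⟩, funext fun p => ?_⟩
        rcases h1 p with h | h <;> (have := hm2 p; omega)
    rw [hCD]
    -- membership in D and basic facts
    have hmemD : ∀ a ∈ D, ∀ p, a p = m p ∨ a p = n p - m p := by
      intro a ha p
      rw [hD, Fintype.mem_piFinset] at ha
      simpa using ha p
    have hleD : ∀ a ∈ D, ∀ p, a p ≤ n p := by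
      intro a ha p
      rcases hmemD a ha p with h | h <;> (have := hm2 p; omega)
    have hnegD : ∀ a ∈ D, (fun p => n p - a p) ∈ D := by
      intro a ha
      rw [hD, Fintype.mem_piFinset]
      intro p
      simp only [Finset.mem_insert, Finset.mem_singleton]
      rcases hmemD a ha p with h | h <;> (have := hm2 p; omega)
    have hsumneg : ∀ a ∈ D, (∑ p, (n p - a p)) + ∑ p, a p = N := by
      intro a ha
      rw [← Finset.sum_add_distrib, hN]
      exact Finset.sum_congr rfl fun p _ => by have := hleD a ha p; omega
    have hsumle : ∀ a ∈ D, ∑ p, a p ≤ N := by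
      intro a ha
      rw [hN]
      exact Finset.sum_le_sum fun p _ => hleD a ha p
    have hcards : (D.filter (fun a => ∑ p, a p ≤ M)).card
        = (D.filter (fun a => ¬ ∑ p, a p ≤ M)).card := by
      apply Finset.card_nbij' (fun a p => n p - a p) (fun a p => n p - a p)
      · intro a ha
        rw [Finset.mem_coe, Finset.mem_filter] at ha ⊢
        refine ⟨hnegD a ha.1, ?_⟩
        show ¬ ∑ p, (n p - a p) ≤ M
        have := hsumneg a ha.1
        omega
      · intro a ha
        rw [Finset.mem_coe, Finset.mem_filter] at ha ⊢
        refine ⟨hnegD a ha.1, ?_⟩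
        show ∑ p, (n p - a p) ≤ M
        have := hsumneg a ha.1
        have := hsumle a ha.1
        omega
      · intro a ha
        rw [Finset.mem_coe, Finset.mem_filter] at ha
        funext p
        have := hleD a ha.1 p
        simp only
        omega
      · intro a ha
        rw [Finset.mem_coe, Finset.mem_filter] at ha
        funext p
        have := hleD a ha.1 p
        simp only
        omega
    have hsplit := Finset.card_filter_add_card_filter_not
      (s := D) (p := fun a => ∑ p, a p ≤ M)
    have hDcard : D.card = ∏ p, ({m p, n p - m p} : Finset ℕ).card :=
      Fintype.card_piFinset _
    have hpair : ∀ p, Odd (n p) → ({m p, n p - m p} : Finset ℕ).card = 2 := by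
      intro p hodd
      refine Finset.card_pair ?_
      intro h
      obtain ⟨c, hc⟩ := hodd
      have h3 := hm2 p
      clear * - h hc h3
      omega
    have h4dvd : 4 ∣ D.card := by
      obtain ⟨p1, hp1, p2, hp2, hne⟩ :=
        Finset.one_lt_card.1 (show 1 < (Finset.univ.filter fun p => Odd (n p)).card by clear * - hk3; omega)
      rw [Finset.mem_filter] at hp1 hp2
      have hsplit2 : (∏ p, ({m p, n p - m p} : Finset ℕ).card)
          = ({m p1, n p1 - m p1} : Finset ℕ).card
            * ∏ p ∈ Finset.univ.erase p1, ({m p, n p - m p} : Finset ℕ).card :=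
        (Finset.mul_prod_erase Finset.univ _ (Finset.mem_univ p1)).symm
      have hdvd2 : ({m p2, n p2 - m p2} : Finset ℕ).card
          ∣ ∏ p ∈ Finset.univ.erase p1, ({m p, n p - m p} : Finset ℕ).card :=
        Finset.dvd_prod_of_mem _ (Finset.mem_erase.2 ⟨hne.symm, Finset.mem_univ p2⟩)
      rw [hpair p2 hp2.2] at hdvd2
      obtain ⟨c, hc⟩ := hdvd2
      rw [hDcard, hsplit2, hpair p1 hp1.2, hc]
      exact ⟨c, by ring⟩
    rw [Nat.even_iff]
    generalize hx : (D.filter (fun a => ∑ p, a p ≤ M)).card = x at hsplit hcards ⊢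
    generalize hy : (D.filter (fun a => ¬ ∑ p, a p ≤ M)).card = y at hsplit hcards
    generalize hz : D.card = z at hsplit h4dvd
    clear * - hsplit hcards h4dvd
    omega
  obtain ⟨c, hc⟩ := heven
  rw [hc, add_nsmul]
  have h2 : ∀ x : MvPolynomial (Σ p : Fin q, Fin (n p / 2)) (ZMod 2), x + x = 0 :=
    fun x => CharTwo.add_self_eq_zero x
  have := h2 (c • ∏ p, bb q n p (m p))
  convert this using 2
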